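/- Let n and k be positive integers with k ≤ n, and let G be a simple graph on vertex set {1,…,n}. Define f : Gr(k,n) → ℝ by f(P) = Σ_{(i,j)∈E} P_{ii} P_{jj} + Σ_{i=1}^n P_{ii}², where the first sum runs over ordered adjacent pairs (so each undirected edge is counted twice). Then G contains a clique of size k if and only if the supremum of f over Gr(k,n) equals k²; moreover, when a k-clique exists this supremum is attained (i.e., k² is the greatest element of the image of f on Gr(k,n)). -/

import Mathlib

open Matrix BigOperators

/-- The projection model of the Grassmannian `Gr(k,n)`: real symmetric idempotent
`n × n` matrices of trace `k`. -/
def Grassmannian (k n : ℕ) : Set (Matrix (Fin n) (Fin n) ℝ) :=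
  {P | Pᵀ = P ∧ P * P = P ∧ P.trace = (k : ℝ)}

/-- The quadratic objective `f(P) = ∑_{(i,j)∈E} P_{ii} P_{jj} + ∑_i P_{ii}²`,
where each undirected edge is counted twice (ordered adjacent pairs). -/
noncomputable def cliqueObjective {n : ℕ} (G : SimpleGraph (Fin n)) [DecidableRel G.Adj]
    (P : Matrix (Fin n) (Fin n) ℝ) : ℝ :=
  (∑ i, ∑ j, if G.Adj i j then P i i * P j j else 0) + ∑ i, (P i i) ^ 2

section Aux

variable {n k : ℕ} (G : SimpleGraph (Fin n)) [DecidableRel G.Adj]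

lemma grass_diag_eq_sum_sq {P : Matrix (Fin n) (Fin n) ℝ} (h : P ∈ Grassmannian k n)
    (i : Fin n) : P i i = ∑ j, (P i j) ^ 2 := by
  obtain ⟨hsym, hidem, -⟩ := h
  conv_lhs => rw [← hidem]
  rw [Matrix.mul_apply]
  refine Finset.sum_congr rfl fun j _ => ?_
  have : P j i = P i j := by conv_lhs => rw [← hsym, Matrix.transpose_apply]
  rw [this, sq]

lemma grass_diag_nonneg {P : Matrix (Fin n) (Fin n) ℝ} (h : P ∈ Grassmannian k n)
    (i : Fin n) : 0 ≤ P i i := by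
  rw [grass_diag_eq_sum_sq h i]
  exact Finset.sum_nonneg fun j _ => sq_nonneg _

lemma grass_entry_sq_le {P : Matrix (Fin n) (Fin n) ℝ} (h : P ∈ Grassmannian k n)
    (i j : Fin n) : (P i j) ^ 2 ≤ P i i := by
  rw [grass_diag_eq_sum_sq h i]
  exact Finset.single_le_sum (fun l _ => sq_nonneg (P i l)) (Finset.mem_univ j)

lemma grass_diag_le_one {P : Matrix (Fin n) (Fin n) ℝ} (h : P ∈ Grassmannian k n)
    (i : Fin n) : P i i ≤ 1 := by
  have h1 := grass_entry_sq_le h i i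
  have h2 := grass_diag_nonneg h i
  nlinarith

lemma grass_diag_sum {P : Matrix (Fin n) (Fin n) ℝ} (h : P ∈ Grassmannian k n) :
    ∑ i, P i i = (k : ℝ) := by
  have := h.2.2
  simpa [Matrix.trace, Matrix.diag] using this

/-- Key identity: `(∑ d_i)² = f(P) + (nonadjacent off-diagonal remainder)`. -/
lemma keyIdentity (P : Matrix (Fin n) (Fin n) ℝ) :
    (∑ i, P i i) ^ 2 = cliqueObjective G P +
      ∑ i, ∑ j, (if ¬G.Adj i j ∧ i ≠ j then P i i * P j j else 0) := by
  have hsplit : ∀ i j : Fin n, P i i * P j j =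
      (if G.Adj i j then P i i * P j j else 0) + (if i = j then P i i * P j j else 0) +
        (if ¬G.Adj i j ∧ i ≠ j then P i i * P j j else 0) := by
    intro i j
    by_cases h : G.Adj i j
    · simp [h, G.ne_of_adj h]
    · by_cases h2 : i = j <;> simp [h, h2]
  have hmid : ∀ i : Fin n, (∑ j, if i = j then P i i * P j j else 0) = (P i i) ^ 2 := by
    intro i
    simp [Finset.sum_ite_eq, sq]
  calc (∑ i, P i i) ^ 2 = ∑ i, ∑ j, P i i * P j j := by
        rw [sq, Finset.sum_mul_sum]
    _ = ∑ i, ((∑ j, if G.Adj i j then P i i * P j j else 0) +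
          (∑ j, if i = j then P i i * P j j else 0) +
          ∑ j, (if ¬G.Adj i j ∧ i ≠ j then P i i * P j j else 0)) := by
        refine Finset.sum_congr rfl fun i _ => ?_
        rw [← Finset.sum_add_distrib, ← Finset.sum_add_distrib]
        exact Finset.sum_congr rfl fun j _ => hsplit i j
    _ = (∑ i, ∑ j, if G.Adj i j then P i i * P j j else 0) +
          (∑ i, (P i i) ^ 2) +
          ∑ i, ∑ j, (if ¬G.Adj i j ∧ i ≠ j then P i i * P j j else 0) := by
        rw [← Finset.sum_add_distrib, ← Finset.sum_add_distrib]
        exact Finset.sum_congr rfl fun i _ => by rw [hmid i]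
    _ = _ := by unfold cliqueObjective; ring

lemma remainder_nonneg {P : Matrix (Fin n) (Fin n) ℝ} (h : P ∈ Grassmannian k n) :
    0 ≤ ∑ i, ∑ j, (if ¬G.Adj i j ∧ i ≠ j then P i i * P j j else 0) := by
  refine Finset.sum_nonneg fun i _ => Finset.sum_nonneg fun j _ => ?_
  split
  · exact mul_nonneg (grass_diag_nonneg h i) (grass_diag_nonneg h j)
  · exact le_refl 0

lemma grass_upper_bound {P : Matrix (Fin n) (Fin n) ℝ} (h : P ∈ Grassmannian k n) :
    cliqueObjective G P ≤ (k : ℝ) ^ 2 := by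
  have hkey := keyIdentity G P
  rw [grass_diag_sum h] at hkey
  have := remainder_nonneg G h
  linarith

lemma indicator_mem (s : Finset (Fin n)) (hcard : s.card = k) :
    Matrix.diagonal (fun i => if i ∈ s then (1 : ℝ) else 0) ∈ Grassmannian k n := by
  refine ⟨Matrix.diagonal_transpose _, ?_, ?_⟩
  · rw [Matrix.diagonal_mul_diagonal]
    ext i j
    rcases eq_or_ne i j with rfl | hij
    · by_cases h : i ∈ s <;> simp [h]
    · simp [Matrix.diagonal_apply_ne _ hij]
  · rw [Matrix.trace_diagonal]
    rw [Finset.sum_ite_mem, Finset.univ_inter]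
    simp [hcard]

lemma clique_value (s : Finset (Fin n)) (hs : G.IsNClique k s) :
    cliqueObjective G (Matrix.diagonal fun i => if i ∈ s then (1 : ℝ) else 0) = (k : ℝ) ^ 2 := by
  set P := Matrix.diagonal fun i : Fin n => if i ∈ s then (1 : ℝ) else 0 with hP
  have hmem : P ∈ Grassmannian k n := indicator_mem s hs.2
  have hkey := keyIdentity G P
  rw [grass_diag_sum hmem] at hkey
  have hrem : ∑ i, ∑ j, (if ¬G.Adj i j ∧ i ≠ j then P i i * P j j else 0) = 0 := by
    refine Finset.sum_eq_zero fun i _ => Finset.sum_eq_zero fun j _ => ?_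
    split
    · rename_i hcond
      obtain ⟨hnadj, hne⟩ := hcond
      have hdiag : ∀ l : Fin n, P l l = if l ∈ s then (1 : ℝ) else 0 := fun l => by
        simp [hP, Matrix.diagonal_apply_eq]
      by_cases hi : i ∈ s
      · by_cases hj : j ∈ s
        · exact absurd (hs.1 hi hj hne) hnadj
        · simp [hdiag, hj]
      · simp [hdiag, hi]
    · rfl
  rw [hrem] at hkey
  linarith

lemma grass_nonempty (hkn : k ≤ n) : (Grassmannian k n).Nonempty := by
  obtain ⟨s, -, hcard⟩ := Finset.exists_subset_card_eq (s := (Finset.univ : Finset (Fin n))) (n := k)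
    (by simpa using hkn)
  exact ⟨_, indicator_mem s hcard⟩

lemma grass_isCompact : IsCompact (Grassmannian k n) := by
  have hK : IsCompact {P : Matrix (Fin n) (Fin n) ℝ | ∀ i j, P i j ∈ Set.Icc (-1 : ℝ) 1} := by
    have h1 : IsCompact (Set.pi Set.univ fun _ : Fin n =>
        Set.pi Set.univ fun _ : Fin n => Set.Icc (-1 : ℝ) 1) :=
      isCompact_univ_pi fun _ => isCompact_univ_pi fun _ => isCompact_Icc
    refine Eq.subst (motive := fun S : Set (Matrix (Fin n) (Fin n) ℝ) => IsCompact S) (Eq.symm ?_) h1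
    ext P
    exact ⟨fun hP i _ j _ => hP i j, fun hP i j => hP i (Set.mem_univ i) j (Set.mem_univ j)⟩
  refine IsCompact.of_isClosed_subset hK ?_ ?_
  · have h1 : IsClosed {P : Matrix (Fin n) (Fin n) ℝ | Pᵀ = P} :=
      isClosed_eq (continuous_id.matrix_transpose) continuous_id
    have h2 : IsClosed {P : Matrix (Fin n) (Fin n) ℝ | P * P = P} :=
      isClosed_eq (continuous_id.matrix_mul continuous_id) continuous_id
    have h3 : IsClosed {P : Matrix (Fin n) (Fin n) ℝ | P.trace = (k : ℝ)} :=
      isClosed_eq (continuous_id.matrix_trace) continuous_const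
    have : Grassmannian k n = {P : Matrix (Fin n) (Fin n) ℝ | Pᵀ = P} ∩
        ({P | P * P = P} ∩ {P | P.trace = (k : ℝ)}) := rfl
    rw [this]
    exact h1.inter (h2.inter h3)
  · intro P hP i j
    have h1 := grass_entry_sq_le (k := k) hP i j
    have h2 := grass_diag_le_one (k := k) hP i
    constructor <;> nlinarith

lemma objective_continuous : Continuous (cliqueObjective G) := by
  have hentry : ∀ i j : Fin n, Continuous fun P : Matrix (Fin n) (Fin n) ℝ => P i j :=
    fun i j => (continuous_apply j).comp (continuous_apply i)
  unfold cliqueObjective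
  refine Continuous.add ?_ ?_
  · refine continuous_finset_sum _ fun i _ => continuous_finset_sum _ fun j _ => ?_
    by_cases h : G.Adj i j
    · simp only [h, ↓reduceIte]; exact (hentry i i).mul (hentry j j)
    · simpa [h] using continuous_const
  · exact continuous_finset_sum _ fun i _ => (hentry i i).pow 2

end Aux

theorem clique_decision_iff_sup_eq_k_sq (n k : ℕ) (hk : 0 < k) (hkn : k ≤ n)
    (G : SimpleGraph (Fin n)) [DecidableRel G.Adj] :
    ((∃ s : Finset (Fin n), G.IsNClique k s) ↔
      sSup (cliqueObjective G '' Grassmannian k n) = (k : ℝ) ^ 2) ∧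
    ((∃ s : Finset (Fin n), G.IsNClique k s) →
      IsGreatest (cliqueObjective G '' Grassmannian k n) ((k : ℝ) ^ 2)) := by
  have hub : ∀ x ∈ cliqueObjective G '' Grassmannian k n, x ≤ (k : ℝ) ^ 2 := by
    rintro x ⟨P, hP, rfl⟩
    exact grass_upper_bound G hP
  have hgreat : (∃ s : Finset (Fin n), G.IsNClique k s) →
      IsGreatest (cliqueObjective G '' Grassmannian k n) ((k : ℝ) ^ 2) := by
    rintro ⟨s, hs⟩
    exact ⟨⟨_, indicator_mem s hs.2, clique_value G s hs⟩, hub⟩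
  refine ⟨⟨fun h => (hgreat h).csSup_eq, ?_⟩, hgreat⟩
  intro h
  have hcomp : IsCompact (cliqueObjective G '' Grassmannian k n) :=
    (grass_isCompact (k := k) (n := n)).image (objective_continuous G)
  have hne : (cliqueObjective G '' Grassmannian k n).Nonempty :=
    (grass_nonempty hkn).image _
  have hmem : sSup (cliqueObjective G '' Grassmannian k n) ∈
      cliqueObjective G '' Grassmannian k n := hcomp.sSup_mem hne
  rw [h] at hmem
  obtain ⟨P, hP, hfP⟩ := hmem
  -- the remainder vanishes
  have hkey := keyIdentity G P
  rw [grass_diag_sum hP, hfP] at hkey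
  have hrem : ∑ i, ∑ j, (if ¬G.Adj i j ∧ i ≠ j then P i i * P j j else 0) = 0 := by
    linarith
  have hterm : ∀ i j : Fin n, ¬G.Adj i j → i ≠ j → P i i * P j j = 0 := by
    intro i j hnadj hne
    have hnn : ∀ i ∈ Finset.univ, (0 : ℝ) ≤
        ∑ j, (if ¬G.Adj i j ∧ i ≠ j then P i i * P j j else 0) := by
      intro i _
      refine Finset.sum_nonneg fun j _ => ?_
      split
      · exact mul_nonneg (grass_diag_nonneg hP i) (grass_diag_nonneg hP j)
      · exact le_refl 0
    have hinner := (Finset.sum_eq_zero_iff_of_nonneg hnn).mp hrem i (Finset.mem_univ i)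
    have hnn2 : ∀ j ∈ Finset.univ,
        (0 : ℝ) ≤ (if ¬G.Adj i j ∧ i ≠ j then P i i * P j j else 0) := by
      intro j _
      split
      · exact mul_nonneg (grass_diag_nonneg hP i) (grass_diag_nonneg hP j)
      · exact le_refl 0
    have := (Finset.sum_eq_zero_iff_of_nonneg hnn2).mp hinner j (Finset.mem_univ j)
    simpa [hnadj, hne] using this
  -- the support of the diagonal is a clique of size ≥ k
  set t := Finset.univ.filter (fun i : Fin n => P i i ≠ 0) with ht
  have hsum : ∑ i ∈ t, P i i = (k : ℝ) := by
    rw [ht, Finset.sum_filter_ne_zero]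
    exact grass_diag_sum hP
  have hcardt : k ≤ t.card := by
    by_contra hlt
    push_neg at hlt
    have : ∑ i ∈ t, P i i ≤ ∑ i ∈ t, (1 : ℝ) :=
      Finset.sum_le_sum fun i _ => grass_diag_le_one hP i
    rw [hsum, Finset.sum_const, nsmul_eq_mul, mul_one] at this
    have : (k : ℝ) ≤ (t.card : ℝ) := this
    exact absurd (Nat.cast_le.mp this) (by omega)
  obtain ⟨s, hst, hcard⟩ := Finset.exists_subset_card_eq hcardt
  refine ⟨s, ?_, hcard⟩
  intro i hi j hj hij
  by_contra hnadj
  have h0 := hterm i j hnadj hij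
  have hi' : P i i ≠ 0 := (Finset.mem_filter.mp (hst hi)).2
  have hj' : P j j ≠ 0 := (Finset.mem_filter.mp (hst hj)).2
  exact (mul_ne_zero hi' hj') h0
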